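/- Let G ≠ 0 and K ≠ 0 be real constants. For U ∈ PSym(3) define the Biot stress T = 2G · dev₃(log U) + K · tr(log U) · 1. Then the constitutive relation is explicitly invertible: exp( (1/(2G)) · dev₃(T) + (1/(9K)) · tr(T) · 1 ) = U, where exp is the matrix exponential. -/

import Mathlib

open Matrix

/-- The principal matrix logarithm of a symmetric (positive definite) matrix, obtained by
applying the real logarithm to the eigenvalues in a spectral decomposition (junk value `0`
on non-Hermitian input). -/
noncomputable def matLog (A : Matrix (Fin 3) (Fin 3) ℝ) : Matrix (Fin 3) (Fin 3) ℝ :=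
  if hA : A.IsHermitian then hA.cfc Real.log else 0

/-- The deviatoric part `dev₃(X) = X − (tr X / 3)·1` of a 3×3 matrix. -/
noncomputable def dev3 (X : Matrix (Fin 3) (Fin 3) ℝ) : Matrix (Fin 3) (Fin 3) ℝ :=
  X - (X.trace / 3) • 1

set_option maxHeartbeats 1000000 in
lemma exp_matLog (U : Matrix (Fin 3) (Fin 3) ℝ) (hU : U.PosDef) :
    NormedSpace.exp (matLog U) = U := by
  have hA : U.IsHermitian := hU.isHermitian
  rw [matLog, dif_pos hA, Matrix.IsHermitian.cfc, Unitary.conjStarAlgAut_apply]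
  set V := hA.eigenvectorUnitary
  have hV : (V : Matrix (Fin 3) (Fin 3) ℝ) * star (V : Matrix (Fin 3) (Fin 3) ℝ) = 1 :=
    (Matrix.mem_unitaryGroup_iff).mp V.2
  have hV' : star (V : Matrix (Fin 3) (Fin 3) ℝ) * (V : Matrix (Fin 3) (Fin 3) ℝ) = 1 :=
    (Matrix.mem_unitaryGroup_iff').mp V.2
  set W : (Matrix (Fin 3) (Fin 3) ℝ)ˣ :=
    ⟨(V : Matrix (Fin 3) (Fin 3) ℝ), star (V : Matrix (Fin 3) (Fin 3) ℝ), hV, hV'⟩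
  have hWinv : (↑W⁻¹ : Matrix (Fin 3) (Fin 3) ℝ) = star (V : Matrix (Fin 3) (Fin 3) ℝ) := rfl
  have hWval : (↑W : Matrix (Fin 3) (Fin 3) ℝ) = (V : Matrix (Fin 3) (Fin 3) ℝ) := rfl
  calc NormedSpace.exp ((V : Matrix (Fin 3) (Fin 3) ℝ) *
          diagonal (RCLike.ofReal ∘ Real.log ∘ hA.eigenvalues) * star (V : Matrix (Fin 3) (Fin 3) ℝ))
      = NormedSpace.exp ((↑W : Matrix (Fin 3) (Fin 3) ℝ) *
          diagonal (RCLike.ofReal ∘ Real.log ∘ hA.eigenvalues) * ↑W⁻¹) := by rw [hWinv, hWval]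
    _ = ↑W * NormedSpace.exp (diagonal (RCLike.ofReal ∘ Real.log ∘ hA.eigenvalues)) * ↑W⁻¹ :=
        Matrix.exp_units_conj W _
    _ = (V : Matrix (Fin 3) (Fin 3) ℝ) * diagonal (RCLike.ofReal ∘ hA.eigenvalues)
          * star (V : Matrix (Fin 3) (Fin 3) ℝ) := by
        rw [hWinv, hWval, Matrix.exp_diagonal]
        have hfun : NormedSpace.exp (RCLike.ofReal ∘ Real.log ∘ hA.eigenvalues)
            = (RCLike.ofReal ∘ hA.eigenvalues : Fin 3 → ℝ) := by
          rw [Pi.exp_def]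
          funext i
          simp only [Function.comp_apply, RCLike.ofReal_real_eq_id, id_eq]
          rw [← Real.exp_eq_exp_ℝ]
          exact Real.exp_log (hU.eigenvalues_pos i)
        rw [hfun]
    _ = U := by
        have h := hA.spectral_theorem
        rw [Unitary.conjStarAlgAut_apply] at h
        exact h.symm

/-- For `G ≠ 0`, `K ≠ 0` and `U` positive definite, the Biot stress
`T = 2G·dev₃(log U) + K·tr(log U)·1` of Becker's law satisfies the explicit inversion
formula `exp((1/2G)·dev₃(T) + (1/9K)·tr(T)·1) = U`, where `exp` is the matrix
exponential. -/
theorem becker_law_inversion (G K : ℝ) (hG : G ≠ 0) (hK : K ≠ 0)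
    (U : Matrix (Fin 3) (Fin 3) ℝ) (hU : U.PosDef) :
    let T : Matrix (Fin 3) (Fin 3) ℝ :=
      (2 * G) • dev3 (matLog U) + (K * (matLog U).trace) • 1
    NormedSpace.exp
        ((1 / (2 * G)) • dev3 T + ((1 / (9 * K)) * T.trace) • (1 : Matrix (Fin 3) (Fin 3) ℝ))
      = U := by
  intro T
  set L := matLog U with hL
  have htr1 : (1 : Matrix (Fin 3) (Fin 3) ℝ).trace = 3 := by
    simp [Matrix.trace_one]
  have htrT : T.trace = 3 * K * L.trace := by
    simp only [T, dev3, trace_add, trace_smul, trace_sub, htr1, smul_eq_mul]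
    ring
  have harg : (1 / (2 * G)) • dev3 T + ((1 / (9 * K)) * T.trace) • (1 : Matrix (Fin 3) (Fin 3) ℝ)
      = L := by
    have h : T = (2 * G) • (L - (L.trace / 3) • 1) + (K * L.trace) • 1 := rfl
    rw [dev3, htrT, h]
    match_scalars <;> field_simp <;> ring
  rw [harg, hL]
  exact exp_matLog U hU
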